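/- arXiv:2203.13421 — 4 statements merged into one kernel-verified Lean document; each statement's English description precedes it below -/
import Mathlib

section
/- For any hypothesis class H of functions X → {0,1} and any manipulation relation → on X, the VC-dimension of H is at most the VC-dimension of the strategic loss class H_{ℓ→}. -/
open MeasureTheory

open Classical in
noncomputable def l01 {X : Type*} (h : X → Bool) (x : X) (y : Bool) : ℝ :=
  if h x ≠ y then 1 else 0

open Classical in
noncomputable def lsc {X : Type*} (R : X → X → Prop) (h : X → Bool) (x : X) : ℝ :=
  if h x = false ∧ ∃ x', R x x' ∧ h x' = true then 1 else 0

open Classical in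
noncomputable def lstr {X : Type*} (R : X → X → Prop) (h : X → Bool) (x : X) (y : Bool) : ℝ :=
  if h x ≠ y ∨ (h x = false ∧ ∃ x', R x x' ∧ h x' = true) then 1 else 0

def lossSet01 {X : Type*} (h : X → Bool) : Set (X × Bool) := {p | h p.1 ≠ p.2}

def lossSetSc {X : Type*} (R : X → X → Prop) (h : X → Bool) : Set (X × Bool) :=
  {p | h p.1 = false ∧ ∃ x', R p.1 x' ∧ h x' = true}

def lossSetStr {X : Type*} (R : X → X → Prop) (h : X → Bool) : Set (X × Bool) :=
  {p | h p.1 ≠ p.2 ∨ (h p.1 = false ∧ ∃ x', R p.1 x' ∧ h x' = true)}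

def graphOf {X : Type*} (h : X → Bool) : Set (X × Bool) := {p | p.2 = h p.1}

def Shatters {Z : Type*} (U : Set (Set Z)) (S : Finset Z) : Prop :=
  ∀ T ⊆ S, ∃ u ∈ U, ∀ z ∈ S, (z ∈ u ↔ z ∈ T)

noncomputable def vcDim {Z : Type*} (U : Set (Set Z)) : ℕ∞ :=
  ⨆ (S : Finset Z) (_ : Shatters U S), (S.card : ℕ∞)

def ShattersF {X : Type*} (H : Set (X → Bool)) (S : Finset X) : Prop :=
  ∀ f : X → Bool, ∃ h ∈ H, ∀ x ∈ S, h x = f x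

noncomputable def vcDimF {X : Type*} (H : Set (X → Bool)) : ℕ∞ :=
  ⨆ (S : Finset X) (_ : ShattersF H S), (S.card : ℕ∞)

noncomputable def sLoss {X : Type*} [MeasurableSpace X] (P : Measure (X × Bool))
    (R : X → X → Prop) (h : X → Bool) : ℝ := ∫ p, lstr R h p.1 p.2 ∂P

noncomputable def bLoss {X : Type*} [MeasurableSpace X] (P : Measure (X × Bool))
    (h : X → Bool) : ℝ := ∫ p, l01 h p.1 p.2 ∂P

noncomputable def scLoss {X : Type*} [MeasurableSpace X] (PX : Measure X)
    (R : X → X → Prop) (h : X → Bool) : ℝ := ∫ x, lsc R h x ∂PX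

noncomputable def gdist {X : Type*} [MeasurableSpace X] (H : Set (X → Bool))
    (PX : Measure X) (R R' : X → X → Prop) : ℝ :=
  ⨆ h : H, ∫ x, |lsc R h.1 x - lsc R' h.1 x| ∂PX

open Classical in
noncomputable def lgr {X : Type*} (h : X → Bool) (R' : X → X → Prop) (x : X) (B : Set X) : ℝ :=
  if (h x = false ∧ (∃ x' ∈ B, h x' = true) ∧ (∀ x'', R' x x'' → h x'' = false)) ∨
     (h x = false ∧ (∀ x' ∈ B, h x' = false) ∧ (∃ x'', R' x x'' ∧ h x'' = true)) then 1 else 0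

def grLossSet {X : Type*} (h : X → Bool) (R' : X → X → Prop) : Set (X × Set X) :=
  {p | lgr h R' p.1 p.2 = 1}

lemma mem_lossSetStr_true {X : Type*} (R : X → X → Prop) (h : X → Bool) (x : X) :
    (x, true) ∈ lossSetStr R h ↔ h x = false := by
  cases hx : h x <;> simp [lossSetStr, hx]

theorem stmt2 {X : Type*} (H : Set (X → Bool)) (R : X → X → Prop) :
    vcDim {s | ∃ h ∈ H, s = graphOf h} ≤ vcDim {s | ∃ h ∈ H, s = lossSetStr R h} := by
  classical
  refine iSup₂_le fun S hS => ?_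
  obtain ⟨u0, ⟨h0, h0H, rfl⟩, hu0⟩ := hS S le_rfl
  have hinj : Set.InjOn (fun p : X × Bool => (p.1, true)) S := by
    intro p hp q hq hpq
    have h1 := (hu0 p hp).mpr hp
    have h2 := (hu0 q hq).mpr hq
    simp only [graphOf, Set.mem_setOf_eq] at h1 h2
    have hx : p.1 = q.1 := by simpa using hpq
    exact Prod.ext hx (h1.trans (by rw [hx, ← h2]))
  set S' := S.image (fun p : X × Bool => (p.1, true)) with hS'def
  have hcard : S'.card = S.card := Finset.card_image_of_injOn hinj
  have hshat : Shatters {s | ∃ h ∈ H, s = lossSetStr R h} S' := by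
    intro T' hT'
    set d : X → Bool := fun x => if (x, true) ∈ T' then false else true with hd
    obtain ⟨u, ⟨h, hH, rfl⟩, hu⟩ := hS (S.filter (fun p => p.2 = d p.1))
      (Finset.filter_subset _ _)
    refine ⟨lossSetStr R h, ⟨h, hH, rfl⟩, ?_⟩
    intro z hz
    obtain ⟨p, hp, rfl⟩ := Finset.mem_image.mp hz
    have key : (p.2 = h p.1) ↔ (p.2 = d p.1) := by
      simpa [graphOf, Finset.mem_filter, hp] using hu p hp
    have hhd : h p.1 = d p.1 := by
      cases hy : p.2 <;> cases hh : h p.1 <;> cases hdd : d p.1 <;> simp_all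
    rw [mem_lossSetStr_true, hhd, hd]
    by_cases ht : (p.1, true) ∈ T' <;> simp [ht]
  calc (S.card : ℕ∞) = S'.card := by rw [hcard]
    _ ≤ _ := le_iSup₂ (f := fun (T : Finset (X × Bool))
        (_ : Shatters {s | ∃ h ∈ H, s = lossSetStr R h} T) => (T.card : ℕ∞)) S' hshat
end

section
/- For every natural number d there exist a domain X, a hypothesis class H of functions X → {0,1}, and a manipulation relation → on X, such that VC(H) = 1 but the strategic loss class H_{ℓ→} shatters a set of size d (hence VC(H_{ℓ→}) ≥ d). -/
open MeasureTheory

theorem stmt3 (d : ℕ) :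
    ∃ (X : Type) (H : Set (X → Bool)) (R : X → X → Prop) (S : Finset (X × Bool)),
      vcDim {s | ∃ h ∈ H, s = graphOf h} = 1 ∧
      Shatters {s | ∃ h ∈ H, s = lossSetStr R h} S ∧ S.card = d := by
  classical
  set X : Type := (Fin d) ⊕ (Finset (Fin d)) with hX
  let H : Set (X → Bool) :=
    insert (fun _ => false) {h | ∃ A : Finset (Fin d), h = fun x => decide (x = Sum.inr A)}
  let R : X → X → Prop := fun a b =>
    match a, b with
    | Sum.inl i, Sum.inr A => i ∈ A
    | _, _ => False
  let S : Finset (X × Bool) :=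
    Finset.univ.image (fun i : Fin d => ((Sum.inl i : X), false))
  -- each h ∈ H is true at most at one point
  have hone : ∀ h ∈ H, ∀ x y : X, h x = true → h y = true → x = y := by
    rintro h (rfl | ⟨A, rfl⟩) x y hx hy
    · simp at hx
    · simp only [decide_eq_true_eq] at hx hy
      rw [hx, hy]
  refine ⟨X, H, R, S, ?_, ?_, ?_⟩
  · -- VC dimension of graphs is 1
    apply le_antisymm
    · refine iSup_le fun T => iSup_le fun hT => ?_
      by_contra hc
      push_neg at hc
      have h2 : 2 ≤ T.card := by
        by_contra h
        push_neg at h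
        exact hc.not_ge (by exact_mod_cast Nat.lt_succ_iff.mp h)
      obtain ⟨p, hp, q, hq, hpq⟩ := Finset.one_lt_card.mp h2
      -- choose the pattern forcing h true at both first coords
      by_cases hfst : p.1 = q.1
      · -- then p.2 ≠ q.2 : both in graph impossible
        obtain ⟨u, ⟨h, hhH, rfl⟩, hu⟩ := hT {p, q} (by intro z hz; simp at hz; rcases hz with rfl|rfl <;> assumption)
        have hp' : p ∈ graphOf h := (hu p hp).mpr (by simp)
        have hq' : q ∈ graphOf h := (hu q hq).mpr (by simp)
        simp only [graphOf, Set.mem_setOf_eq] at hp' hq'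
        apply hpq
        have : p.2 = q.2 := by rw [hp', hq', hfst]
        exact Prod.ext hfst this
      · set T' : Finset (X × Bool) :=
          (if p.2 then {p} else ∅) ∪ (if q.2 then {q} else ∅) with hT'
        have hsub : T' ⊆ T := by
          intro z hz
          rw [hT'] at hz
          simp only [Finset.mem_union] at hz
          rcases hz with hz | hz <;> split_ifs at hz <;> simp_all
        obtain ⟨u, ⟨h, hhH, rfl⟩, hu⟩ := hT T' hsub
        have hpT' : p ∈ T' ↔ p.2 = true := by
          rw [hT']; rcases hb : p.2 <;> rcases hb' : q.2 <;>
            simp [hb, hb', Prod.ext_iff, hfst]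
        have hqT' : q ∈ T' ↔ q.2 = true := by
          rw [hT']; rcases hb : p.2 <;> rcases hb' : q.2 <;>
            simp [hb, hb', Prod.ext_iff, fun (e : q.1 = p.1) => hfst e.symm]
        have hp' := (hu p hp)
        have hq' := (hu q hq)
        rw [hpT'] at hp'
        rw [hqT'] at hq'
        simp only [graphOf, Set.mem_setOf_eq] at hp' hq'
        have h1 : h p.1 = true := by
          rcases hb : p.2 <;> rcases hh : h p.1 <;> simp_all
        have h2' : h q.1 = true := by
          rcases hb : q.2 <;> rcases hh : h q.1 <;> simp_all
        exact hfst (hone h hhH _ _ h1 h2')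
    · -- VC ≥ 1 : shatter the singleton {(inr ∅, true)}
      have hsh : Shatters {s | ∃ h ∈ H, s = graphOf h}
          ({((Sum.inr ∅ : X), true)} : Finset (X × Bool)) := by
        intro T hTsub
        by_cases hmem : ((Sum.inr ∅ : X), true) ∈ T
        · refine ⟨graphOf (fun x : X => decide (x = Sum.inr ∅)),
            ⟨_, Or.inr ⟨∅, rfl⟩, rfl⟩, ?_⟩
          intro z hz
          simp only [Finset.mem_singleton] at hz
          subst hz
          simp [graphOf, hmem]
        · refine ⟨graphOf (fun _ : X => false), ⟨_, Or.inl rfl, rfl⟩, ?_⟩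
          intro z hz
          simp only [Finset.mem_singleton] at hz
          subst hz
          simp [graphOf, hmem]
      calc (1 : ℕ∞) ≤ ⨆ (_ : Shatters {s | ∃ h ∈ H, s = graphOf h}
                ({((Sum.inr ∅ : X), true)} : Finset (X × Bool))),
              ((({((Sum.inr ∅ : X), true)} : Finset (X × Bool))).card : ℕ∞) := by
              rw [iSup_pos hsh]; simp
        _ ≤ _ := le_iSup (fun S : Finset (X × Bool) =>
              ⨆ (_ : Shatters {s | ∃ h ∈ H, s = graphOf h} S), (S.card : ℕ∞))
              ({((Sum.inr ∅ : X), true)} : Finset (X × Bool))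
  · -- strategic loss class shatters S
    intro T hTsub
    set A : Finset (Fin d) := Finset.univ.filter (fun i => ((Sum.inl i : X), false) ∈ T) with hA
    refine ⟨lossSetStr R (fun x : X => decide (x = Sum.inr A)),
      ⟨_, Or.inr ⟨A, rfl⟩, rfl⟩, ?_⟩
    intro z hz
    simp only [S, Finset.mem_image, Finset.mem_univ, true_and] at hz
    obtain ⟨i, rfl⟩ := hz
    constructor
    · intro hmem
      simp only [lossSetStr, Set.mem_setOf_eq] at hmem
      rcases hmem with hmem | ⟨_, x', hR, hx'⟩
      · simp at hmem
      · simp only [decide_eq_true_eq] at hx'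
        subst hx'
        have : i ∈ A := hR
        rw [hA] at this
        simpa using this
    · intro hmem
      simp only [lossSetStr, Set.mem_setOf_eq]
      refine Or.inr ⟨by simp, Sum.inr A, ?_, by simp⟩
      show i ∈ A
      rw [hA]
      simpa using hmem
  · -- card
    have hinj : Function.Injective (fun i : Fin d => ((Sum.inl i : X), false)) := by
      intro a b hab
      exact Sum.inl.inj (congrArg Prod.fst hab)
    rw [Finset.card_image_of_injective _ hinj]
    simp
end

section
/- For any two manipulation relations → and ⇝ on X, any probability distribution P on X × {0,1} with marginal P_X on X, and any hypothesis h in a class H, the expected strategic loss under → satisfies L→_P(h) ≤ L01_P(h) + L⊥⇝_P(h) + d_{H,P_X}(→,⇝), where the three terms are the expected binary loss, the expected strategic component loss under ⇝, and the H-P_X-distance between the graphs. -/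
open MeasureTheory

lemma lsc_abs_le {X : Type*} (R : X → X → Prop) (h : X → Bool) (x : X) :
    |lsc R h x| ≤ 1 := by
  unfold lsc; split_ifs <;> norm_num

lemma lsc_diff_abs_le {X : Type*} (R R' : X → X → Prop) (h : X → Bool) (x : X) :
    |lsc R h x - lsc R' h x| ≤ 1 := by
  unfold lsc; split_ifs <;> norm_num

lemma lstr_le {X : Type*} (R : X → X → Prop) (h : X → Bool) (x : X) (y : Bool) :
    lstr R h x y ≤ l01 h x y + lsc R h x := by
  unfold lstr l01 lsc; split_ifs <;> norm_num <;> aesop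

lemma integrable_of_bdd {X : Type*} [MeasurableSpace X] {μ : MeasureTheory.Measure X}
    [MeasureTheory.IsProbabilityMeasure μ] {f : X → ℝ} (hf : Measurable f)
    (hb : ∀ x, |f x| ≤ 1) : MeasureTheory.Integrable f μ :=
  ⟨hf.aestronglyMeasurable,
   MeasureTheory.HasFiniteIntegral.of_bounded (C := 1) (Filter.Eventually.of_forall hb)⟩

lemma integral_le_one_of_bdd {X : Type*} [MeasurableSpace X] {μ : MeasureTheory.Measure X}
    [MeasureTheory.IsProbabilityMeasure μ] {f : X → ℝ} (hf : Measurable f)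
    (hb : ∀ x, |f x| ≤ 1) : ∫ x, f x ∂μ ≤ 1 := by
  calc ∫ x, f x ∂μ ≤ ∫ _, (1 : ℝ) ∂μ := by
        refine MeasureTheory.integral_mono (integrable_of_bdd hf hb)
          (MeasureTheory.integrable_const 1) ?_
        intro x; exact le_trans (le_abs_self _) (hb x)
    _ = 1 := by simp

theorem stmt7 {X : Type*} [MeasurableSpace X] (P : Measure (X × Bool))
    [IsProbabilityMeasure P] (H : Set (X → Bool)) (R R' : X → X → Prop)
    (h : X → Bool) (hH : h ∈ H)
    (hm : ∀ g ∈ H, Measurable (lsc R g)) (hm' : ∀ g ∈ H, Measurable (lsc R' g))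
    (hms : Measurable (fun p : X × Bool => lstr R h p.1 p.2))
    (hmb : Measurable (fun p : X × Bool => l01 h p.1 p.2)) :
    sLoss P R h ≤ bLoss P h + scLoss (P.map Prod.fst) R' h
      + gdist H (P.map Prod.fst) R R' :=  by
  have hfst : Measurable (Prod.fst : X × Bool → X) := measurable_fst
  have hprob : IsProbabilityMeasure (P.map Prod.fst) :=
    Measure.isProbabilityMeasure_map hfst.aemeasurable
  have hmR : Measurable (lsc R h) := hm h hH
  have hmR' : Measurable (lsc R' h) := hm' h hH
  have hib : Integrable (fun p : X × Bool => l01 h p.1 p.2) P := by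
    refine integrable_of_bdd hmb ?_
    intro p; unfold l01; split_ifs <;> norm_num
  have hisc : Integrable (fun p : X × Bool => lsc R h p.1) P :=
    integrable_of_bdd (hmR.comp hfst) (fun p => lsc_abs_le _ _ _)
  have hiscμ : Integrable (lsc R h) (P.map Prod.fst) :=
    integrable_of_bdd hmR (fun x => lsc_abs_le _ _ _)
  have hiscμ' : Integrable (lsc R' h) (P.map Prod.fst) :=
    integrable_of_bdd hmR' (fun x => lsc_abs_le _ _ _)
  have hiabs : Integrable (fun x => |lsc R h x - lsc R' h x|) (P.map Prod.fst) := by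
    refine integrable_of_bdd ((hmR.sub hmR').abs) ?_
    intro x; rw [abs_abs]; exact lsc_diff_abs_le _ _ _ _
  have step1 : sLoss P R h ≤ bLoss P h + ∫ p, lsc R h p.1 ∂P := by
    rw [bLoss, ← integral_add hib hisc]
    exact integral_mono (integrable_of_bdd hms
        (fun p => by unfold lstr; split_ifs <;> norm_num))
      (hib.add hisc) (fun p => lstr_le R h p.1 p.2)
  have step2 : ∫ p, lsc R h p.1 ∂P = ∫ x, lsc R h x ∂(P.map Prod.fst) :=
    (integral_map hfst.aemeasurable hmR.aestronglyMeasurable).symm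
  have step3 : ∫ x, lsc R h x ∂(P.map Prod.fst)
      ≤ scLoss (P.map Prod.fst) R' h
        + ∫ x, |lsc R h x - lsc R' h x| ∂(P.map Prod.fst) := by
    unfold scLoss
    rw [← integral_add hiscμ' hiabs]
    refine integral_mono hiscμ (hiscμ'.add hiabs) (fun x => ?_)
    have := le_abs_self (lsc R h x - lsc R' h x)
    simp only [Pi.add_apply]; linarith
  have step4 : ∫ x, |lsc R h x - lsc R' h x| ∂(P.map Prod.fst)
      ≤ gdist H (P.map Prod.fst) R R' := by
    unfold gdist
    have hbdd : BddAbove (Set.range fun g : H =>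
        ∫ x, |lsc R g.1 x - lsc R' g.1 x| ∂(P.map Prod.fst)) := by
      refine ⟨1, ?_⟩
      rintro y ⟨g, rfl⟩
      refine integral_le_one_of_bdd (((hm g.1 g.2).sub (hm' g.1 g.2)).abs) ?_
      intro x; rw [abs_abs]; exact lsc_diff_abs_le _ _ _ _
    exact le_ciSup hbdd (⟨h, hH⟩ : H)
  calc sLoss P R h ≤ bLoss P h + ∫ p, lsc R h p.1 ∂P := step1
    _ = bLoss P h + ∫ x, lsc R h x ∂(P.map Prod.fst) := by rw [step2]
    _ ≤ bLoss P h + scLoss (P.map Prod.fst) R' h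
        + gdist H (P.map Prod.fst) R R' := by linarith
end

section
/- For any two manipulation relations → and ⇝, any distribution P on X × {0,1}, and any h ∈ H, the expected strategic loss under → is bounded above by twice the expected strategic loss under ⇝ plus d_{H,P_X}(→,⇝): L→_P(h) ≤ 2·L⇝_P(h) + d_{H,P_X}(→,⇝). -/
open MeasureTheory

section Aux
variable {X : Type*}

lemma lsc_mem (R : X → X → Prop) (h : X → Bool) (x : X) :
    lsc R h x = 0 ∨ lsc R h x = 1 := by unfold lsc; split_ifs <;> simp

lemma lstr_mem (R : X → X → Prop) (h : X → Bool) (x : X) (y : Bool) :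
    lstr R h x y = 0 ∨ lstr R h x y = 1 := by unfold lstr; split_ifs <;> simp

lemma key_ptwise (R R' : X → X → Prop) (h : X → Bool) (x : X) (y : Bool) :
    lstr R h x y ≤ 2 * lstr R' h x y + |lsc R h x - lsc R' h x| := by
  unfold lstr lsc
  split_ifs with h1 h2 h3 h4 h3 h4 <;> simp_all <;> norm_num <;>
    first
      | tauto
      | (rcases h1 with h1 | h1; · tauto; · tauto)
      | positivity
end Aux

theorem stmt8 {X : Type*} [MeasurableSpace X] (P : Measure (X × Bool))
    [IsProbabilityMeasure P] (H : Set (X → Bool)) (R R' : X → X → Prop)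
    (h : X → Bool) (hH : h ∈ H)
    (hm : ∀ g ∈ H, Measurable (lsc R g)) (hm' : ∀ g ∈ H, Measurable (lsc R' g))
    (hms : Measurable (fun p : X × Bool => lstr R h p.1 p.2))
    (hms' : Measurable (fun p : X × Bool => lstr R' h p.1 p.2))
    (hmb : Measurable (fun p : X × Bool => l01 h p.1 p.2)) :
    sLoss P R h ≤ 2 * sLoss P R' h + gdist H (P.map Prod.fst) R R' := by
  have hfst : Measurable (Prod.fst : X × Bool → X) := measurable_fst
  have hPX : IsProbabilityMeasure (P.map Prod.fst) := Measure.isProbabilityMeasure_map hfst.aemeasurable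
  -- integrability helpers
  have bdd01 : ∀ (f : X × Bool → ℝ), Measurable f → (∀ p, f p = 0 ∨ f p = 1) →
      Integrable f P := by
    intro f mf hf
    refine (integrable_const (1 : ℝ)).mono' mf.aestronglyMeasurable ?_
    filter_upwards with p
    rcases hf p with h' | h' <;> simp [h']
  have intR : Integrable (fun p : X × Bool => lstr R h p.1 p.2) P :=
    bdd01 _ hms (fun p => lstr_mem R h p.1 p.2)
  have intR' : Integrable (fun p : X × Bool => lstr R' h p.1 p.2) P :=
    bdd01 _ hms' (fun p => lstr_mem R' h p.1 p.2)
  have mdiff : ∀ g ∈ H, Measurable (fun x => |lsc R g x - lsc R' g x|) := by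
    intro g hg; exact ((hm g hg).sub (hm' g hg)).abs
  have intdiffP : Integrable (fun p : X × Bool => |lsc R h p.1 - lsc R' h p.1|) P := by
    refine (integrable_const (2 : ℝ)).mono'
      ((mdiff h hH).comp hfst).aestronglyMeasurable ?_
    filter_upwards with p
    rw [Real.norm_eq_abs, abs_abs]
    have := lsc_mem R h p.1; have := lsc_mem R' h p.1
    rcases ‹lsc R h p.1 = 0 ∨ _› with h1 | h1 <;>
      rcases ‹lsc R' h p.1 = 0 ∨ _› with h2 | h2 <;> rw [h1, h2] <;> norm_num
  have intdiffPX : ∀ g ∈ H, Integrable (fun x => |lsc R g x - lsc R' g x|) (P.map Prod.fst) := by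
    intro g hg
    refine (integrable_const (2 : ℝ)).mono' (mdiff g hg).aestronglyMeasurable ?_
    filter_upwards with x
    rw [Real.norm_eq_abs, abs_abs]
    rcases lsc_mem R g x with h1 | h1 <;>
      rcases lsc_mem R' g x with h2 | h2 <;> simp only [h1, h2] <;> norm_num
  -- main chain
  have step1 : sLoss P R h ≤ 2 * sLoss P R' h + ∫ p, |lsc R h p.1 - lsc R' h p.1| ∂P := by
    have : sLoss P R h ≤ ∫ p, (2 * lstr R' h p.1 p.2 + |lsc R h p.1 - lsc R' h p.1|) ∂P := by
      refine integral_mono intR ((intR'.const_mul 2).add intdiffP) ?_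
      intro p; exact key_ptwise R R' h p.1 p.2
    rw [integral_add (intR'.const_mul 2) intdiffP, integral_const_mul] at this
    exact this
  have step2 : ∫ p, |lsc R h p.1 - lsc R' h p.1| ∂P
      = ∫ x, |lsc R h x - lsc R' h x| ∂(P.map Prod.fst) := by
    rw [integral_map hfst.aemeasurable (mdiff h hH).aestronglyMeasurable]
  have step3 : ∫ x, |lsc R h x - lsc R' h x| ∂(P.map Prod.fst) ≤ gdist H (P.map Prod.fst) R R' := by
    have hb : BddAbove (Set.range fun g : H =>
        ∫ x, |lsc R g.1 x - lsc R' g.1 x| ∂(P.map Prod.fst)) := by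
      refine ⟨2, ?_⟩
      rintro _ ⟨g, rfl⟩
      calc ∫ x, |lsc R g.1 x - lsc R' g.1 x| ∂(P.map Prod.fst)
          ≤ ∫ _x, (2 : ℝ) ∂(P.map Prod.fst) := by
            refine integral_mono (intdiffPX g.1 g.2) (integrable_const 2) ?_
            intro x
            rcases lsc_mem R g.1 x with h1 | h1 <;>
              rcases lsc_mem R' g.1 x with h2 | h2 <;> simp only [h1, h2] <;> norm_num
        _ = 2 := by simp
    exact le_ciSup hb (⟨h, hH⟩ : H)
  calc sLoss P R h ≤ 2 * sLoss P R' h + ∫ p, |lsc R h p.1 - lsc R' h p.1| ∂P := step1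
    _ ≤ 2 * sLoss P R' h + gdist H (P.map Prod.fst) R R' := by
        rw [step2]; linarith [step3]
end
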